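/- Let μ₁, μ₂ ∈ ℝ and σ₁, σ₂, σ₃, σ₄ > 0. Let p be the pushforward of the uniform probability measure on [−√3, √3] under the map x ↦ (if x ≤ 0 then σ₁·x + μ₁ else σ₂·x + μ₁), and let q be the pushforward of the uniform probability measure on [−√3, √3] under x ↦ (if x ≤ 0 then σ₃·x + μ₂ else σ₄·x + μ₂). Then W₂²(p, q) = (μ₁ − μ₂)² + (1/2)(σ₁ − σ₃)² + (1/2)(σ₂ − σ₄)² + √(3/4)·(μ₁ − μ₂)·(σ₂ − σ₁ + σ₃ − σ₄). -/
import Mathlib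

open MeasureTheory ProbabilityTheory
open scoped ENNReal NNReal

/-- The uniform probability measure on `[a, b]`: `(b - a)⁻¹ • (volume.restrict (Set.Icc a b))`. -/
noncomputable def unif (a b : ℝ) : Measure ℝ :=
  (ENNReal.ofReal (b - a))⁻¹ • volume.restrict (Set.Icc a b)

/-- Squared 2-Wasserstein distance between two measures on a normed space `E`:
the infimum over all couplings `γ` of `p` and `q` of `∫ ‖x - y‖² dγ(x, y)`. -/
noncomputable def W2sq {E : Type*} [NormedAddCommGroup E] [MeasurableSpace E]
    (p q : Measure E) : ℝ :=
  sInf { c | ∃ γ : Measure (E × E), IsProbabilityMeasure γ ∧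
    γ.map Prod.fst = p ∧ γ.map Prod.snd = q ∧ c = ∫ z, ‖z.1 - z.2‖ ^ 2 ∂γ }

noncomputable def phiW (μ₁ μ₂ σ₁ σ₂ σ₃ σ₄ x : ℝ) : ℝ :=
  (if x ≤ μ₁ then σ₃/(2*σ₁)*(x-μ₁)^2 else σ₄/(2*σ₂)*(x-μ₁)^2) + μ₂*(x-μ₁)

noncomputable def psiW (μ₁ μ₂ σ₁ σ₂ σ₃ σ₄ y : ℝ) : ℝ :=
  (if y ≤ μ₂ then σ₁/(2*σ₃)*(y-μ₂)^2 else σ₂/(2*σ₄)*(y-μ₂)^2) + μ₁*y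

lemma phiW_continuous (μ₁ μ₂ σ₁ σ₂ σ₃ σ₄ : ℝ) :
    Continuous (phiW μ₁ μ₂ σ₁ σ₂ σ₃ σ₄) := by
  unfold phiW
  apply Continuous.add
  · apply Continuous.if_le (by fun_prop) (by fun_prop) continuous_id continuous_const
    intro x hx; simp only [id_eq] at hx; rw [hx]; ring
  · fun_prop

lemma psiW_continuous (μ₁ μ₂ σ₁ σ₂ σ₃ σ₄ : ℝ) :
    Continuous (psiW μ₁ μ₂ σ₁ σ₂ σ₃ σ₄) := by
  unfold psiW
  apply Continuous.add
  · apply Continuous.if_le (by fun_prop) (by fun_prop) continuous_id continuous_const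
    intro x hx; simp only [id_eq] at hx; rw [hx]; ring
  · fun_prop

lemma youngW (μ₁ μ₂ σ₁ σ₂ σ₃ σ₄ : ℝ)
    (hσ₁ : 0 < σ₁) (hσ₂ : 0 < σ₂) (hσ₃ : 0 < σ₃) (hσ₄ : 0 < σ₄) (x y : ℝ) :
    x * y ≤ phiW μ₁ μ₂ σ₁ σ₂ σ₃ σ₄ x + psiW μ₁ μ₂ σ₁ σ₂ σ₃ σ₄ y := by
  unfold phiW psiW
  set a := x - μ₁ with ha
  set b := y - μ₂ with hb
  have hxy : x * y = a*b + μ₂*a + μ₁*y := by rw [ha, hb]; ring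
  rw [hxy]
  have main : a * b ≤ (if x ≤ μ₁ then σ₃/(2*σ₁)*a^2 else σ₄/(2*σ₂)*a^2)
      + (if y ≤ μ₂ then σ₁/(2*σ₃)*b^2 else σ₂/(2*σ₄)*b^2) := by
    have hax : x ≤ μ₁ ↔ a ≤ 0 := by rw [ha]; constructor <;> intro <;> linarith
    have hby : y ≤ μ₂ ↔ b ≤ 0 := by rw [hb]; constructor <;> intro <;> linarith
    split_ifs with h1 h2 h2
    · rw [hax] at h1; rw [hby] at h2
      have e : σ₃/(2*σ₁)*a^2 + σ₁/(2*σ₃)*b^2 - a*b = (σ₃*a - σ₁*b)^2/(2*σ₁*σ₃) := by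
        field_simp; ring
      nlinarith [sq_nonneg (σ₃*a - σ₁*b), mul_pos hσ₁ hσ₃,
        div_nonneg (sq_nonneg (σ₃*a - σ₁*b)) (le_of_lt (by positivity : (0:ℝ) < 2*σ₁*σ₃))]
    · rw [hax] at h1; rw [hby] at h2; push_neg at h2
      have : a * b ≤ 0 := mul_nonpos_iff.mpr (Or.inr ⟨h1, le_of_lt h2⟩)
      exact le_trans this (by positivity)
    · rw [hax] at h1; push_neg at h1; rw [hby] at h2
      have : a * b ≤ 0 := mul_nonpos_iff.mpr (Or.inl ⟨le_of_lt h1, h2⟩)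
      exact le_trans this (by positivity)
    · have e : σ₄/(2*σ₂)*a^2 + σ₂/(2*σ₄)*b^2 - a*b = (σ₄*a - σ₂*b)^2/(2*σ₂*σ₄) := by
        field_simp; ring
      nlinarith [div_nonneg (sq_nonneg (σ₄*a - σ₂*b)) (le_of_lt (by positivity : (0:ℝ) < 2*σ₂*σ₄))]
  linarith

lemma graphW (μ₁ μ₂ σ₁ σ₂ σ₃ σ₄ : ℝ)
    (hσ₁ : 0 < σ₁) (hσ₂ : 0 < σ₂) (hσ₃ : 0 < σ₃) (hσ₄ : 0 < σ₄) (u : ℝ) :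
    phiW μ₁ μ₂ σ₁ σ₂ σ₃ σ₄ (if u ≤ 0 then σ₁*u+μ₁ else σ₂*u+μ₁)
      + psiW μ₁ μ₂ σ₁ σ₂ σ₃ σ₄ (if u ≤ 0 then σ₃*u+μ₂ else σ₄*u+μ₂)
      = (if u ≤ 0 then σ₁*u+μ₁ else σ₂*u+μ₁) * (if u ≤ 0 then σ₃*u+μ₂ else σ₄*u+μ₂) := by
  unfold phiW psiW
  rcases le_or_gt u 0 with hu | hu
  · have h1 : σ₁*u+μ₁ ≤ μ₁ := by nlinarith
    have h2 : σ₃*u+μ₂ ≤ μ₂ := by nlinarith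
    simp only [if_pos hu, if_pos h1, if_pos h2]
    field_simp
    ring
  · have h1 : ¬ (σ₂*u+μ₁ ≤ μ₁) := by push_neg; nlinarith
    have h2 : ¬ (σ₄*u+μ₂ ≤ μ₂) := by push_neg; nlinarith
    simp only [if_neg (not_le.mpr hu), if_neg h1, if_neg h2]
    field_simp
    ring

lemma poly_int (a b c d : ℝ) :
    ∫ x in a..b, (c + d*x)^2 = c^2*(b-a) + c*d*(b^2-a^2) + d^2*(b^3-a^3)/3 := by
  have h : ∀ x:ℝ, (c+d*x)^2 = c^2 + ((2*c*d)*x + d^2*x^2) := by intro x; ring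
  simp_rw [h]
  rw [intervalIntegral.integral_add (by apply Continuous.intervalIntegrable; fun_prop)
      (by apply Continuous.intervalIntegrable; fun_prop),
    intervalIntegral.integral_add (by apply Continuous.intervalIntegrable; fun_prop)
      (by apply Continuous.intervalIntegrable; fun_prop),
    intervalIntegral.integral_const, intervalIntegral.integral_const_mul,
    intervalIntegral.integral_const_mul, integral_id, integral_pow]
  simp only [smul_eq_mul]
  push_cast
  ring

lemma unif_integral (μ₁ μ₂ σ₁ σ₂ σ₃ σ₄ : ℝ) :
    ∫ x, ((if x ≤ 0 then σ₁*x+μ₁ else σ₂*x+μ₁) - (if x ≤ 0 then σ₃*x+μ₂ else σ₄*x+μ₂))^2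
        ∂(unif (-Real.sqrt 3) (Real.sqrt 3)) =
      (μ₁ - μ₂) ^ 2 + (1 / 2) * (σ₁ - σ₃) ^ 2 + (1 / 2) * (σ₂ - σ₄) ^ 2
        + Real.sqrt (3 / 4) * (μ₁ - μ₂) * (σ₂ - σ₁ + σ₃ - σ₄) := by
  set s := Real.sqrt 3 with hsdef
  have hs0 : 0 < s := Real.sqrt_pos.mpr (by norm_num)
  have hs2 : s^2 = 3 := Real.sq_sqrt (by norm_num)
  have hsq : Real.sqrt (3/4) = s / 2 := by
    rw [show (3:ℝ)/4 = (s/2)^2 by rw [div_pow]; rw [hs2]; norm_num,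
      Real.sqrt_sq (by positivity)]
  set c := μ₁ - μ₂
  set A := σ₁ - σ₃
  set B := σ₂ - σ₄
  have hpt : ∀ x : ℝ,
      ((if x ≤ 0 then σ₁*x+μ₁ else σ₂*x+μ₁) - (if x ≤ 0 then σ₃*x+μ₂ else σ₄*x+μ₂))^2
        = if x ≤ 0 then (c + A*x)^2 else (c + B*x)^2 := by
    intro x; split_ifs <;> ring
  simp_rw [hpt]
  rw [unif, integral_smul_measure]
  rw [ENNReal.toReal_inv, ENNReal.toReal_ofReal (by linarith)]
  have hIcc : ∫ x in Set.Icc (-s) s, (if x ≤ 0 then (c + A*x)^2 else (c + B*x)^2)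
      = ∫ x in (-s)..s, (if x ≤ 0 then (c + A*x)^2 else (c + B*x)^2) := by
    rw [intervalIntegral.integral_of_le (by linarith), integral_Icc_eq_integral_Ioc]
  rw [hIcc]
  have hF : Continuous (fun x : ℝ => if x ≤ 0 then (c + A*x)^2 else (c + B*x)^2) := by
    apply Continuous.if_le (by fun_prop) (by fun_prop) continuous_id continuous_const
    intro x hx; simp only [id_eq] at hx; rw [hx]; ring
  have hsplit : ∫ x in (-s)..s, (if x ≤ 0 then (c + A*x)^2 else (c + B*x)^2)
      = (∫ x in (-s)..(0:ℝ), (if x ≤ 0 then (c + A*x)^2 else (c + B*x)^2))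
        + ∫ x in (0:ℝ)..s, (if x ≤ 0 then (c + A*x)^2 else (c + B*x)^2) :=
    (intervalIntegral.integral_add_adjacent_intervals
      (hF.intervalIntegrable _ _) (hF.intervalIntegrable _ _)).symm
  rw [hsplit]
  have h1 : ∫ x in (-s)..(0:ℝ), (if x ≤ 0 then (c + A*x)^2 else (c + B*x)^2)
      = ∫ x in (-s)..(0:ℝ), (c + A*x)^2 := by
    apply intervalIntegral.integral_congr
    intro x hx
    rw [Set.uIcc_of_le (by linarith)] at hx
    simp only [if_pos hx.2]
  have h2 : ∫ x in (0:ℝ)..s, (if x ≤ 0 then (c + A*x)^2 else (c + B*x)^2)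
      = ∫ x in (0:ℝ)..s, (c + B*x)^2 := by
    apply intervalIntegral.integral_congr
    intro x hx
    rw [Set.uIcc_of_le (by linarith)] at hx
    by_cases h : x ≤ 0
    · have hx0 : x = 0 := le_antisymm h hx.1
      subst hx0; norm_num
    · simp only [if_neg h]
  rw [h1, h2, poly_int, poly_int, smul_eq_mul, hsq]
  have hs3 : s^3 = 3*s := by rw [pow_succ, hs2]
  have hBA : σ₂ - σ₁ + σ₃ - σ₄ = B - A := by simp only [A, B]; ring
  rw [hBA, inv_mul_eq_div, div_eq_iff (ne_of_gt (by linarith : (0:ℝ) < s - -s))]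
  linear_combination (A^2+B^2)/3 * hs3

lemma bound_aux (m σa σb s x : ℝ) (hσa : 0 < σa) (hσb : 0 < σb) (hs : 0 < s)
    (h1 : -s ≤ x) (h2 : x ≤ s) :
    |(if x ≤ 0 then σa*x+m else σb*x+m)| ≤ |m| + (σa+σb)*s := by
  rw [abs_le]
  split_ifs with h <;>
    constructor <;> nlinarith [le_abs_self m, neg_abs_le m]

set_option maxHeartbeats 1000000 in
/-- Squared 2-Wasserstein distance between pushforwards of the uniform measure on
[-√3, √3] under two piecewise linear (two-piece) maps. -/
theorem W2sq_piecewise_pushforward_unif (μ₁ μ₂ σ₁ σ₂ σ₃ σ₄ : ℝ)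
    (hσ₁ : 0 < σ₁) (hσ₂ : 0 < σ₂) (hσ₃ : 0 < σ₃) (hσ₄ : 0 < σ₄) :
    W2sq
      ((unif (-Real.sqrt 3) (Real.sqrt 3)).map
        fun x => if x ≤ 0 then σ₁ * x + μ₁ else σ₂ * x + μ₁)
      ((unif (-Real.sqrt 3) (Real.sqrt 3)).map
        fun x => if x ≤ 0 then σ₃ * x + μ₂ else σ₄ * x + μ₂) =
      (μ₁ - μ₂) ^ 2 + (1 / 2) * (σ₁ - σ₃) ^ 2 + (1 / 2) * (σ₂ - σ₄) ^ 2
        + Real.sqrt (3 / 4) * (μ₁ - μ₂) * (σ₂ - σ₁ + σ₃ - σ₄) := by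
  set s := Real.sqrt 3 with hsdef
  have hs0 : 0 < s := Real.sqrt_pos.mpr (by norm_num)
  set V : ℝ := (μ₁ - μ₂) ^ 2 + (1 / 2) * (σ₁ - σ₃) ^ 2 + (1 / 2) * (σ₂ - σ₄) ^ 2
        + Real.sqrt (3 / 4) * (μ₁ - μ₂) * (σ₂ - σ₁ + σ₃ - σ₄) with hVdef
  set f : ℝ → ℝ := fun x => if x ≤ 0 then σ₁ * x + μ₁ else σ₂ * x + μ₁ with hfdef
  set g : ℝ → ℝ := fun x => if x ≤ 0 then σ₃ * x + μ₂ else σ₄ * x + μ₂ with hgdef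
  set μ : Measure ℝ := unif (-s) s with hμdef
  -- basic facts
  have hμeq : μ = (ENNReal.ofReal (s - -s))⁻¹ • volume.restrict (Set.Icc (-s) s) := rfl
  haveI hμprob : IsProbabilityMeasure μ := by
    constructor
    rw [hμeq, Measure.smul_apply, Measure.restrict_apply_univ, Real.volume_Icc, smul_eq_mul]
    exact ENNReal.inv_mul_cancel (by simp; linarith) ENNReal.ofReal_ne_top
  have hfc : Continuous f := by
    rw [hfdef]
    apply Continuous.if_le (by fun_prop) (by fun_prop) continuous_id continuous_const
    intro x hx; simp only [id_eq] at hx; rw [hx]; ring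
  have hgc : Continuous g := by
    rw [hgdef]
    apply Continuous.if_le (by fun_prop) (by fun_prop) continuous_id continuous_const
    intro x hx; simp only [id_eq] at hx; rw [hx]; ring
  have hμmem : ∀ᵐ x ∂μ, x ∈ Set.Icc (-s) s := by
    rw [hμeq]
    exact Measure.ae_smul_measure (ae_restrict_mem measurableSet_Icc) _
  -- set up potentials
  set A : ℝ → ℝ := fun x => x^2 - 2 * phiW μ₁ μ₂ σ₁ σ₂ σ₃ σ₄ x with hAdef
  set B : ℝ → ℝ := fun y => y^2 - 2 * psiW μ₁ μ₂ σ₁ σ₂ σ₃ σ₄ y with hBdef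
  have hAc : Continuous A := by
    rw [hAdef]; exact (continuous_pow 2).sub (continuous_const.mul (phiW_continuous _ _ _ _ _ _))
  have hBc : Continuous B := by
    rw [hBdef]; exact (continuous_pow 2).sub (continuous_const.mul (psiW_continuous _ _ _ _ _ _))
  -- pointwise Young inequality
  have hYoung : ∀ z : ℝ × ℝ, A z.1 + B z.2 ≤ ‖z.1 - z.2‖^2 := by
    intro z
    have h := youngW μ₁ μ₂ σ₁ σ₂ σ₃ σ₄ hσ₁ hσ₂ hσ₃ hσ₄ z.1 z.2
    have : ‖z.1 - z.2‖^2 = (z.1 - z.2)^2 := by rw [Real.norm_eq_abs, sq_abs]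
    rw [this, hAdef, hBdef]
    simp only
    nlinarith [h]
  -- equality along the graph
  have hGraph : ∀ x : ℝ, A (f x) + B (g x) = (f x - g x)^2 := by
    intro x
    have h := graphW μ₁ μ₂ σ₁ σ₂ σ₃ σ₄ hσ₁ hσ₂ hσ₃ hσ₄ x
    rw [hAdef, hBdef, hfdef, hgdef]
    simp only
    linear_combination -2 * h
  -- the value of the monotone coupling integral
  have hVint : ∫ x, (f x - g x)^2 ∂μ = V := by
    rw [hfdef, hgdef, hVdef, hμdef, hsdef]
    exact unif_integral μ₁ μ₂ σ₁ σ₂ σ₃ σ₄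
  -- bounds on f and g on the support
  set C₁ : ℝ := |μ₁| + (σ₁+σ₂)*s with hC₁
  set C₂ : ℝ := |μ₂| + (σ₃+σ₄)*s with hC₂
  have hfb : ∀ x ∈ Set.Icc (-s) s, |f x| ≤ C₁ := by
    intro x hx
    rw [Set.mem_Icc] at hx
    exact bound_aux μ₁ σ₁ σ₂ s x hσ₁ hσ₂ hs0 hx.1 hx.2
  have hgb : ∀ x ∈ Set.Icc (-s) s, |g x| ≤ C₂ := by
    intro x hx
    rw [Set.mem_Icc] at hx
    exact bound_aux μ₂ σ₃ σ₄ s x hσ₃ hσ₄ hs0 hx.1 hx.2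
  have hfae : ∀ᵐ x ∂μ, |f x| ≤ C₁ := hμmem.mono (fun x hx => hfb x hx)
  have hgae : ∀ᵐ x ∂μ, |g x| ≤ C₂ := hμmem.mono (fun x hx => hgb x hx)
  -- member of the infimum set: the monotone coupling
  unfold W2sq
  have hpair : Measurable (fun x => (f x, g x)) := (hfc.prodMk hgc).measurable
  set γ₀ : Measure (ℝ × ℝ) := μ.map (fun x => (f x, g x)) with hγ₀def
  haveI : IsProbabilityMeasure γ₀ := Measure.isProbabilityMeasure_map hpair.aemeasurable
  have hγ₀fst : γ₀.map Prod.fst = μ.map f := by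
    rw [hγ₀def, Measure.map_map measurable_fst hpair]
    rfl
  have hγ₀snd : γ₀.map Prod.snd = μ.map g := by
    rw [hγ₀def, Measure.map_map measurable_snd hpair]
    rfl
  have hγ₀int : ∫ z, ‖z.1 - z.2‖^2 ∂γ₀ = V := by
    rw [hγ₀def, integral_map hpair.aemeasurable
      (by fun_prop : Continuous (fun z : ℝ × ℝ => ‖z.1 - z.2‖^2)).aestronglyMeasurable]
    rw [← hVint]
    congr 1
    funext x
    rw [Real.norm_eq_abs, sq_abs]
  have hmem : V ∈ { c | ∃ γ : Measure (ℝ × ℝ), IsProbabilityMeasure γ ∧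
      γ.map Prod.fst = μ.map f ∧ γ.map Prod.snd = μ.map g ∧
      c = ∫ z, ‖z.1 - z.2‖ ^ 2 ∂γ } :=
    ⟨γ₀, inferInstance, hγ₀fst, hγ₀snd, hγ₀int.symm⟩
  -- lower bound
  have hlb : ∀ c ∈ { c | ∃ γ : Measure (ℝ × ℝ), IsProbabilityMeasure γ ∧
      γ.map Prod.fst = μ.map f ∧ γ.map Prod.snd = μ.map g ∧
      c = ∫ z, ‖z.1 - z.2‖ ^ 2 ∂γ }, V ≤ c := by
    rintro c ⟨γ, hγprob, hγ1, hγ2, hc⟩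
    haveI := hγprob
    -- a.e. bounds for the coupling
    have hγfst : ∀ᵐ z ∂γ, |z.1| ≤ C₁ := by
      rw [ae_iff]
      have hset : MeasurableSet {y : ℝ | ¬ |y| ≤ C₁} :=
        (measurableSet_le measurable_abs measurable_const).compl
      have heq : {z : ℝ × ℝ | ¬ |z.1| ≤ C₁} = Prod.fst ⁻¹' {y : ℝ | ¬ |y| ≤ C₁} := rfl
      rw [heq, ← Measure.map_apply measurable_fst hset, hγ1,
        Measure.map_apply hfc.measurable hset]
      have : {x : ℝ | ¬ |f x| ≤ C₁} = f ⁻¹' {y : ℝ | ¬ |y| ≤ C₁} := rfl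
      rw [← this, ← ae_iff]
      exact hfae
    have hγsnd : ∀ᵐ z ∂γ, |z.2| ≤ C₂ := by
      rw [ae_iff]
      have hset : MeasurableSet {y : ℝ | ¬ |y| ≤ C₂} :=
        (measurableSet_le measurable_abs measurable_const).compl
      have heq : {z : ℝ × ℝ | ¬ |z.2| ≤ C₂} = Prod.snd ⁻¹' {y : ℝ | ¬ |y| ≤ C₂} := rfl
      rw [heq, ← Measure.map_apply measurable_snd hset, hγ2,
        Measure.map_apply hgc.measurable hset]
      have : {x : ℝ | ¬ |g x| ≤ C₂} = g ⁻¹' {y : ℝ | ¬ |y| ≤ C₂} := rfl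
      rw [← this, ← ae_iff]
      exact hgae
    -- integrability
    obtain ⟨CA, hCA⟩ := (isCompact_Icc (a := -C₁) (b := C₁)).exists_bound_of_continuousOn
      hAc.continuousOn
    obtain ⟨CB, hCB⟩ := (isCompact_Icc (a := -C₂) (b := C₂)).exists_bound_of_continuousOn
      hBc.continuousOn
    have hintA : Integrable (fun z : ℝ × ℝ => A z.1) γ :=
      ⟨(hAc.comp continuous_fst).aestronglyMeasurable,
        HasFiniteIntegral.of_bounded (C := CA)
          (hγfst.mono (fun z hz => hCA z.1 (abs_le.mp hz |> fun h => Set.mem_Icc.mpr h)))⟩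
    have hintB : Integrable (fun z : ℝ × ℝ => B z.2) γ :=
      ⟨(hBc.comp continuous_snd).aestronglyMeasurable,
        HasFiniteIntegral.of_bounded (C := CB)
          (hγsnd.mono (fun z hz => hCB z.2 (abs_le.mp hz |> fun h => Set.mem_Icc.mpr h)))⟩
    have hintF : Integrable (fun z : ℝ × ℝ => ‖z.1 - z.2‖^2) γ := by
      refine ⟨(by fun_prop : Continuous (fun z : ℝ × ℝ => ‖z.1 - z.2‖^2)).aestronglyMeasurable,
        HasFiniteIntegral.of_bounded (C := (C₁ + C₂)^2) ?_⟩
      filter_upwards [hγfst, hγsnd] with z h1 h2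
      have : ‖z.1 - z.2‖ ≤ C₁ + C₂ := by
        rw [Real.norm_eq_abs]
        calc |z.1 - z.2| ≤ |z.1| + |z.2| := abs_sub _ _
          _ ≤ C₁ + C₂ := add_le_add h1 h2
      rw [Real.norm_eq_abs (‖z.1 - z.2‖^2), abs_of_nonneg (by positivity)]
      exact pow_le_pow_left₀ (norm_nonneg _) this 2
    -- integrability over μ
    have hintAf : Integrable (fun x => A (f x)) μ :=
      ⟨(hAc.comp hfc).aestronglyMeasurable,
        HasFiniteIntegral.of_bounded (C := CA)
          (hfae.mono (fun x hx => hCA (f x) (Set.mem_Icc.mpr (abs_le.mp hx))))⟩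
    have hintBg : Integrable (fun x => B (g x)) μ :=
      ⟨(hBc.comp hgc).aestronglyMeasurable,
        HasFiniteIntegral.of_bounded (C := CB)
          (hgae.mono (fun x hx => hCB (g x) (Set.mem_Icc.mpr (abs_le.mp hx))))⟩
    calc V = ∫ x, (f x - g x)^2 ∂μ := hVint.symm
      _ = ∫ x, (A (f x) + B (g x)) ∂μ := by
          congr 1; funext x; rw [hGraph x]
      _ = (∫ x, A (f x) ∂μ) + ∫ x, B (g x) ∂μ := integral_add hintAf hintBg
      _ = (∫ y, A y ∂(μ.map f)) + ∫ y, B y ∂(μ.map g) := by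
          rw [integral_map hfc.measurable.aemeasurable hAc.aestronglyMeasurable,
            integral_map hgc.measurable.aemeasurable hBc.aestronglyMeasurable]
      _ = (∫ z, A z.1 ∂γ) + ∫ z, B z.2 ∂γ := by
          rw [← hγ1, ← hγ2,
            integral_map measurable_fst.aemeasurable hAc.aestronglyMeasurable,
            integral_map measurable_snd.aemeasurable hBc.aestronglyMeasurable]
      _ = ∫ z, (A z.1 + B z.2) ∂γ := (integral_add hintA hintB).symm
      _ ≤ ∫ z, ‖z.1 - z.2‖^2 ∂γ :=
          integral_mono (hintA.add hintB) hintF hYoung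
      _ = c := hc.symm
  exact le_antisymm (csInf_le ⟨V, fun c hc => hlb c hc⟩ hmem) (le_csInf ⟨V, hmem⟩ hlb)
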